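/- arXiv:2602.01209 — 2 statements merged into one kernel-verified Lean document; each statement's English description precedes it below -/
import Mathlib

section
/- Suppose sum_i s̲_i < sum_j d̄_j. Let (C̄, s, d) be a feasible demand-quasi-extreme scenario with free index k satisfying d̄_k < sum_i s_i - sum_{j != k} d_j. Then there exists a balanced feasible quasi-extreme scenario (C̄, s', d'), with sum_i s'_i = sum_j d'_j, such that f(C̄, s, d) <= f(C̄, s', d'). -/
open Finset

/-- A feasible transportation plan for supplies `s` and demands `d`. -/
def IsPlan {m n : ℕ} (s : Fin m → ℝ) (d : Fin n → ℝ) (x : Fin m → Fin n → ℝ) : Prop :=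
  (∀ i j, 0 ≤ x i j) ∧ (∀ i, ∑ j, x i j ≤ s i) ∧ (∀ j, ∑ i, x i j = d j)

/-- Total transportation cost of a plan `x` under cost matrix `C`. -/
def cost {m n : ℕ} (C x : Fin m → Fin n → ℝ) : ℝ :=
  ∑ i, ∑ j, C i j * x i j

/-- Optimal value of the transportation problem with data `(C, s, d)`. -/
noncomputable def optVal {m n : ℕ} (C : Fin m → Fin n → ℝ) (s : Fin m → ℝ)
    (d : Fin n → ℝ) : ℝ :=
  sInf (cost C '' {x | IsPlan s d x})

/-- A supply-demand vector is quasi-extreme if all its coordinates except at most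
one (a supply coordinate, or a demand coordinate) lie at the interval endpoints. -/
def QuasiExtreme {m n : ℕ} (sl su s : Fin m → ℝ) (dl du : Fin n → ℝ)
    (d : Fin n → ℝ) : Prop :=
  (∃ k : Fin m, (∀ i, i ≠ k → s i = sl i ∨ s i = su i) ∧
      (∀ j, d j = dl j ∨ d j = du j)) ∨
  (∃ k : Fin n, (∀ j, j ≠ k → d j = dl j ∨ d j = du j) ∧
      (∀ i, s i = sl i ∨ s i = su i))

lemma exists_mid : ∀ (m : ℕ) (a b : Fin m → ℝ) (T : ℝ), (∀ i, a i ≤ b i) →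
    (∑ i, a i) ≤ T → T ≤ ∑ i, b i →
    ∃ c : Fin m → ℝ, (∀ i, a i ≤ c i ∧ c i ≤ b i) ∧ (∑ i, c i) = T ∧
      ∃ S : Finset (Fin m), S.card ≤ 1 ∧ ∀ i ∉ S, c i = a i ∨ c i = b i := by
  intro m
  induction m with
  | zero =>
    intro a b T hab h1 h2
    refine ⟨a, fun i => ⟨le_rfl, hab i⟩, ?_, ∅, by simp, by simp⟩
    simp at h1 h2 ⊢
    linarith
  | succ m ih =>
    intro a b T hab h1 h2
    rw [Fin.sum_univ_castSucc] at h1 h2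
    by_cases hc : T - ∑ i : Fin m, b i.castSucc ≤ a (Fin.last m)
    · obtain ⟨c₀, hb₀, hs₀, S₀, hS₀card, hS₀⟩ :=
        ih (fun i => a i.castSucc) (fun i => b i.castSucc) (T - a (Fin.last m))
          (fun i => hab _) (by linarith) (by linarith)
      refine ⟨Fin.snoc c₀ (a (Fin.last m)), ?_, ?_,
        S₀.map ⟨Fin.castSucc, Fin.castSucc_injective m⟩, ?_, ?_⟩
      · intro i
        refine Fin.lastCases ?_ ?_ i
        · simp only [Fin.snoc_last]
          exact ⟨le_rfl, hab _⟩
        · intro j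
          simpa [Fin.snoc_castSucc] using hb₀ j
      · rw [Fin.sum_univ_castSucc]
        simp only [Fin.snoc_castSucc, Fin.snoc_last]
        rw [hs₀]; ring
      · simpa using hS₀card
      · intro i hi
        rcases Fin.eq_castSucc_or_eq_last i with ⟨j, rfl⟩ | rfl
        · have hj : j ∉ S₀ := fun h => hi (Finset.mem_map_of_mem _ h)
          simpa [Fin.snoc_castSucc] using hS₀ j hj
        · exact Or.inl (Fin.snoc_last _ _)
    · push_neg at hc
      refine ⟨Fin.snoc (fun i => b i.castSucc) (T - ∑ i : Fin m, b i.castSucc), ?_, ?_,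
        {Fin.last m}, by simp, ?_⟩
      · intro i
        refine Fin.lastCases ?_ ?_ i
        · simp only [Fin.snoc_last]
          constructor <;> linarith
        · intro j
          simp only [Fin.snoc_castSucc]
          exact ⟨hab _, le_rfl⟩
      · rw [Fin.sum_univ_castSucc]
        simp only [Fin.snoc_castSucc, Fin.snoc_last]
        ring
      · intro i hi
        rcases Fin.eq_castSucc_or_eq_last i with ⟨j, rfl⟩ | rfl
        · right
          simp [Fin.snoc_castSucc]
        · exact absurd (Finset.mem_singleton_self _) hi

lemma pick_free {m : ℕ} (hm : 0 < m) (S : Finset (Fin m)) (hS : S.card ≤ 1) :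
    ∃ k : Fin m, ∀ i, i ∈ S → i = k := by
  rcases S.eq_empty_or_nonempty with h | ⟨x, hx⟩
  · exact ⟨⟨0, hm⟩, by simp [h]⟩
  · exact ⟨x, fun i hi => Finset.card_le_one.mp hS i hi x hx⟩

lemma exists_plan {m n : ℕ} (s : Fin m → ℝ) (d : Fin n → ℝ)
    (hs : ∀ i, 0 ≤ s i) (hd : ∀ j, 0 ≤ d j) (hbal : ∑ i, s i = ∑ j, d j) :
    ∃ x, IsPlan s d x := by
  by_cases hT : ∑ i, s i = 0
  · refine ⟨fun _ _ => 0, fun i j => le_rfl, fun i => by simpa using hs i, fun j => ?_⟩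
    have h0 : ∑ j, d j = 0 := hbal ▸ hT
    have := (Finset.sum_eq_zero_iff_of_nonneg (fun j _ => hd j)).mp h0 j (mem_univ j)
    simpa using this.symm
  · have hT0 : 0 < ∑ i, s i :=
      lt_of_le_of_ne (Finset.sum_nonneg fun i _ => hs i) (Ne.symm hT)
    refine ⟨fun i j => s i * d j / (∑ i, s i), fun i j => div_nonneg (mul_nonneg (hs i) (hd j)) hT0.le,
      fun i => ?_, fun j => ?_⟩
    · rw [← Finset.sum_div, ← Finset.mul_sum, ← hbal, mul_div_assoc, div_self hT, mul_one]
    · rw [← Finset.sum_div, ← Finset.sum_mul, mul_comm, mul_div_assoc, div_self hT, mul_one]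

lemma optVal_mono {m n : ℕ} (C : Fin m → Fin n → ℝ) (hC : ∀ i j, 0 ≤ C i j)
    (s s' : Fin m → ℝ) (d d' : Fin n → ℝ)
    (hs : ∀ i, s' i ≤ s i) (hd : ∀ j, d j ≤ d' j) (hd0 : ∀ j, 0 ≤ d j)
    (hne : ∃ x, IsPlan s' d' x) :
    optVal C s d ≤ optVal C s' d' := by
  have hd'0 : ∀ j, 0 ≤ d' j := fun j => le_trans (hd0 j) (hd j)
  apply le_csInf
  · obtain ⟨x, hx⟩ := hne
    exact ⟨cost C x, ⟨x, hx, rfl⟩⟩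
  · rintro v ⟨x, hx, rfl⟩
    obtain ⟨hx0, hxr, hxc⟩ := hx
    set y : Fin m → Fin n → ℝ := fun i j => if d' j = 0 then 0 else x i j * (d j / d' j)
      with hy
    have hyx : ∀ i j, y i j ≤ x i j := by
      intro i j
      by_cases h : d' j = 0
      · simpa [hy, h] using hx0 i j
      · simp only [hy, h, if_false]
        have h1 : d j / d' j ≤ 1 :=
          div_le_one_of_le₀ (hd j) (hd'0 j)
        nlinarith [hx0 i j, div_nonneg (hd0 j) (hd'0 j)]
    have hy0 : ∀ i j, 0 ≤ y i j := by
      intro i j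
      by_cases h : d' j = 0 <;> simp only [hy, h, if_true, if_false, le_refl]
      exact mul_nonneg (hx0 i j) (div_nonneg (hd0 j) (hd'0 j))
    have hyplan : IsPlan s d y := by
      refine ⟨hy0, fun i => ?_, fun j => ?_⟩
      · calc ∑ j, y i j ≤ ∑ j, x i j := Finset.sum_le_sum fun j _ => hyx i j
          _ ≤ s' i := hxr i
          _ ≤ s i := hs i
      · by_cases h : d' j = 0
        · have hdj : d j = 0 := le_antisymm (h ▸ hd j) (hd0 j)
          simp [hy, h, hdj]
        · simp only [hy, h, if_false]
          rw [← Finset.sum_mul, hxc j]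
          field_simp
    have hcost : cost C y ≤ cost C x := by
      unfold cost
      apply Finset.sum_le_sum
      intro i _
      apply Finset.sum_le_sum
      intro j _
      exact mul_le_mul_of_nonneg_left (hyx i j) (hC i j)
    have hbdd : BddBelow (cost C '' {x | IsPlan s d x}) := by
      refine ⟨0, ?_⟩
      rintro v ⟨z, hz, rfl⟩
      exact Finset.sum_nonneg fun i _ => Finset.sum_nonneg fun j _ =>
        mul_nonneg (hC i j) (hz.1 i j)
    calc optVal C s d ≤ cost C y := csInf_le hbdd ⟨y, hyplan, rfl⟩
      _ ≤ cost C x := hcost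

/-- Theorem 3 (demand case): a feasible demand-quasi-extreme scenario whose free
demand cannot reach balance from above is dominated by a balanced feasible
quasi-extreme scenario. -/
theorem balanced_dominates_demand_case {m n : ℕ} (Cb : Fin m → Fin n → ℝ)
    (sl su s : Fin m → ℝ) (dl du d : Fin n → ℝ) (k : Fin n)
    (hCb : ∀ i j, 0 ≤ Cb i j)
    (hsl : ∀ i, 0 ≤ sl i) (hdl : ∀ j, 0 ≤ dl j)
    (hslsu : ∀ i, sl i ≤ su i) (hdldu : ∀ j, dl j ≤ du j)
    (hinfeas : ∑ i, sl i < ∑ j, du j)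
    (hsb : ∀ i, sl i ≤ s i ∧ s i ≤ su i)
    (hdb : ∀ j, dl j ≤ d j ∧ d j ≤ du j)
    (hqe : ∀ j, j ≠ k → d j = dl j ∨ d j = du j)
    (hqes : ∀ i, s i = sl i ∨ s i = su i)
    (hfeas : ∑ j, d j ≤ ∑ i, s i)
    (hk : du k < ∑ i, s i - ∑ j ∈ Finset.univ.erase k, d j) :
    ∃ (s' : Fin m → ℝ) (d' : Fin n → ℝ),
      (∀ i, sl i ≤ s' i ∧ s' i ≤ su i) ∧ (∀ j, dl j ≤ d' j ∧ d' j ≤ du j) ∧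
      QuasiExtreme sl su s' dl du d' ∧ ∑ i, s' i = ∑ j, d' j ∧
      optVal Cb s d ≤ optVal Cb s' d' := by
  classical
  set a : Fin n → ℝ := fun j => if j = k then du k else d j with ha
  have hsum_a : ∑ j, a j = du k + ∑ j ∈ Finset.univ.erase k, d j := by
    rw [← Finset.add_sum_erase _ a (mem_univ k)]
    congr 1
    · simp [ha]
    · apply Finset.sum_congr rfl
      intro j hj
      simp [ha, (Finset.mem_erase.mp hj).1]
  have haT : ∑ j, a j < ∑ i, s i := by
    rw [hsum_a]; linarith
  have had : ∀ j, d j ≤ a j := by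
    intro j
    by_cases h : j = k
    · subst h; simp [ha]; exact (hdb j).2
    · simp [ha, h]
  have hadl : ∀ j, dl j ≤ a j := fun j => le_trans (hdb j).1 (had j)
  have hadu : ∀ j, a j ≤ du j := by
    intro j
    by_cases h : j = k
    · subst h; simp [ha]
    · simp [ha, h]; exact (hdb j).2
  have hd0 : ∀ j, 0 ≤ d j := fun j => le_trans (hdl j) (hdb j).1
  have hm : 0 < m := by
    by_contra h
    push_neg at h
    interval_cases m
    have : ∑ i : Fin 0, s i = 0 := by simp
    have hD : 0 ≤ ∑ j ∈ Finset.univ.erase k, d j :=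
      Finset.sum_nonneg fun j _ => hd0 j
    have : (0:ℝ) ≤ du k := le_trans (hdl k) (hdldu k)
    rw [‹∑ i : Fin 0, s i = 0›] at hk
    linarith
  by_cases hcase : ∑ i, sl i ≤ ∑ j, a j
  · -- Case A: shrink supplies, target T = ∑ a
    obtain ⟨s', hs'b, hs'sum, S, hScard, hSext⟩ :=
      exists_mid m sl s (∑ j, a j) (fun i => (hsb i).1) hcase haT.le
    obtain ⟨k', hk'⟩ := pick_free hm S hScard
    refine ⟨s', a, ?_, ?_, ?_, ?_, ?_⟩
    · intro i
      exact ⟨(hs'b i).1, le_trans (hs'b i).2 (hsb i).2⟩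
    · exact fun j => ⟨hadl j, hadu j⟩
    · left
      refine ⟨k', fun i hi => ?_, fun j => ?_⟩
      · have : i ∉ S := fun h => hi (hk' i h)
        rcases hSext i this with h | h
        · left; exact h
        · rcases hqes i with h' | h'
          · left; rw [h, h']
          · right; rw [h, h']
      · by_cases h : j = k
        · subst h; right; simp [ha]
        · simpa [ha, h] using hqe j h
    · exact hs'sum
    · apply optVal_mono Cb hCb s s' d a (fun i => (hs'b i).2) had hd0
      exact exists_plan s' a (fun i => le_trans (hsl i) (hs'b i).1)
        (fun j => le_trans (hdl j) (hadl j)) (hs'sum.trans rfl)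
  · -- Case B: supplies at sl, grow demands, target ∑ sl
    push_neg at hcase
    obtain ⟨d', hd'b, hd'sum, S, hScard, hSext⟩ :=
      exists_mid n a du (∑ i, sl i) hadu hcase.le hinfeas.le
    have hn : 0 < n := k.pos
    obtain ⟨k'', hk''⟩ := pick_free hn S hScard
    refine ⟨sl, d', ?_, ?_, ?_, ?_, ?_⟩
    · exact fun i => ⟨le_rfl, hslsu i⟩
    · intro j
      exact ⟨le_trans (hadl j) (hd'b j).1, (hd'b j).2⟩
    · right
      refine ⟨k'', fun j hj => ?_, fun i => Or.inl rfl⟩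
      · have : j ∉ S := fun h => hj (hk'' j h)
        rcases hSext j this with h | h
        · by_cases hjk : j = k
          · subst hjk; right; rw [h]; simp [ha]
          · rw [h]; simpa [ha, hjk] using hqe j hjk
        · right; exact h
    · exact hd'sum.symm
    · apply optVal_mono Cb hCb s sl d d' (fun i => (hsb i).1)
        (fun j => le_trans (had j) (hd'b j).1) hd0
      exact exists_plan sl d' hsl
        (fun j => le_trans (hdl j) (le_trans (hadl j) (hd'b j).1)) hd'sum.symm
end

section
/- If all scenarios of the interval transportation problem are feasible (i.e., sum_i s̲_i >= sum_j d̄_j), then the worst optimal value over all scenarios is attained at the scenario (C̄, s̲, d̄): f̄ = f(C̄, s̲, d̄). -/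
open Finset

lemma plan_exists {m n : ℕ} (sl : Fin m → ℝ) (du : Fin n → ℝ)
    (hsl : ∀ i, 0 ≤ sl i) (hdu : ∀ j, 0 ≤ du j)
    (h : ∑ j, du j ≤ ∑ i, sl i) : ∃ x, IsPlan sl du x := by
  by_cases hS : ∑ i, sl i = 0
  · refine ⟨fun _ _ => 0, fun i j => le_refl 0, fun i => by simpa using hsl i, fun j => ?_⟩
    have hdu0 : ∑ j, du j = 0 :=
      le_antisymm (hS ▸ h) (Finset.sum_nonneg fun j _ => hdu j)
    have := (Finset.sum_eq_zero_iff_of_nonneg (fun j _ => hdu j)).1 hdu0 j (mem_univ j)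
    simp [this]
  · have hSpos : 0 < ∑ i, sl i :=
      lt_of_le_of_ne (Finset.sum_nonneg fun i _ => hsl i) (Ne.symm hS)
    refine ⟨fun i j => sl i * du j / (∑ i, sl i),
      fun i j => div_nonneg (mul_nonneg (hsl i) (hdu j)) hSpos.le, ?_, ?_⟩
    · intro i
      rw [← Finset.sum_div, ← Finset.mul_sum, div_le_iff₀ hSpos]
      exact mul_le_mul_of_nonneg_left h (hsl i)
    · intro j
      rw [← Finset.sum_div, ← Finset.sum_mul]
      field_simp

/-- From a plan for `(sl, du)`, scale columns to get a plan for `(s, d)`. -/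
lemma key_le {m n : ℕ} (C Cu : Fin m → Fin n → ℝ) (sl s : Fin m → ℝ)
    (d du : Fin n → ℝ)
    (hC0 : ∀ i j, 0 ≤ C i j) (hCCu : ∀ i j, C i j ≤ Cu i j)
    (hs : ∀ i, sl i ≤ s i) (hd0 : ∀ j, 0 ≤ d j) (hddu : ∀ j, d j ≤ du j)
    (x : Fin m → Fin n → ℝ) (hx : IsPlan sl du x) :
    ∃ y, IsPlan s d y ∧ cost C y ≤ cost Cu x := by
  obtain ⟨hx0, hxs, hxd⟩ := hx
  set r : Fin n → ℝ := fun j => d j / du j with hr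
  have hr0 : ∀ j, 0 ≤ r j := fun j => div_nonneg (hd0 j) ((hd0 j).trans (hddu j))
  have hr1 : ∀ j, r j ≤ 1 := by
    intro j
    rcases eq_or_lt_of_le ((hd0 j).trans (hddu j)) with h0 | h0
    · simp [hr, ← h0]
    · exact (div_le_one h0).2 (hddu j)
  refine ⟨fun i j => x i j * r j, ⟨fun i j => mul_nonneg (hx0 i j) (hr0 j), ?_, ?_⟩, ?_⟩
  · intro i
    refine le_trans (le_trans (Finset.sum_le_sum fun j _ => ?_) (hxs i)) (hs i)
    calc x i j * r j ≤ x i j * 1 := mul_le_mul_of_nonneg_left (hr1 j) (hx0 i j)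
      _ = x i j := mul_one _
  · intro j
    rw [← Finset.sum_mul, hxd j]
    rcases eq_or_lt_of_le ((hd0 j).trans (hddu j)) with h0 | h0
    · have : d j = 0 := le_antisymm (h0 ▸ hddu j) (hd0 j)
      simp [hr, this]
    · rw [hr]; field_simp
  · refine Finset.sum_le_sum fun i _ => Finset.sum_le_sum fun j _ => ?_
    have h1 : x i j * r j ≤ x i j := by
      calc x i j * r j ≤ x i j * 1 := mul_le_mul_of_nonneg_left (hr1 j) (hx0 i j)
        _ = x i j := mul_one _
    calc C i j * (x i j * r j) ≤ C i j * x i j :=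
          mul_le_mul_of_nonneg_left h1 (hC0 i j)
      _ ≤ Cu i j * x i j := mul_le_mul_of_nonneg_right (hCCu i j) (hx0 i j)

/-- If all scenarios are feasible, the worst optimal value over all scenarios is
attained at the scenario (C̄, s̲, d̄). -/
theorem worst_value_all_feasible {m n : ℕ} (Cl Cu : Fin m → Fin n → ℝ)
    (sl su : Fin m → ℝ) (dl du : Fin n → ℝ)
    (hCl : ∀ i j, 0 ≤ Cl i j) (hC : ∀ i j, Cl i j ≤ Cu i j)
    (hsl : ∀ i, 0 ≤ sl i) (hslsu : ∀ i, sl i ≤ su i)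
    (hdl : ∀ j, 0 ≤ dl j) (hdldu : ∀ j, dl j ≤ du j)
    (hallfeas : ∑ j, du j ≤ ∑ i, sl i) :
    IsGreatest {v | ∃ (C : Fin m → Fin n → ℝ) (s : Fin m → ℝ) (d : Fin n → ℝ),
        (∀ i j, Cl i j ≤ C i j ∧ C i j ≤ Cu i j) ∧
        (∀ i, sl i ≤ s i ∧ s i ≤ su i) ∧
        (∀ j, dl j ≤ d j ∧ d j ≤ du j) ∧ v = optVal C s d}
      (optVal Cu sl du) := by
  have hdu0 : ∀ j, 0 ≤ du j := fun j => (hdl j).trans (hdldu j)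
  have hne : ∃ x, IsPlan sl du x := plan_exists sl du hsl hdu0 hallfeas
  constructor
  · exact ⟨Cu, sl, du, fun i j => ⟨hC i j, le_rfl⟩, fun i => ⟨le_rfl, hslsu i⟩,
      fun j => ⟨hdldu j, le_rfl⟩, rfl⟩
  · rintro v ⟨C, s, d, hCb, hsb, hdb, rfl⟩
    have hC0 : ∀ i j, 0 ≤ C i j := fun i j => (hCl i j).trans (hCb i j).1
    -- optVal C s d ≤ cost Cu x for every plan x for (sl, du)
    obtain ⟨x0, hx0p⟩ := hne
    refine le_csInf ⟨cost Cu x0, x0, hx0p, rfl⟩ ?_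
    rintro b ⟨x, hx, rfl⟩
    obtain ⟨y, hy, hle⟩ := key_le C Cu sl s d du hC0 (fun i j => (hCb i j).2)
      (fun i => (hsb i).1) (fun j => (hdl j).trans (hdb j).1) (fun j => (hdb j).2) x hx
    refine le_trans (csInf_le ?_ ⟨y, hy, rfl⟩) hle
    refine ⟨0, ?_⟩
    rintro b ⟨z, hz, rfl⟩
    exact Finset.sum_nonneg fun i _ => Finset.sum_nonneg fun j _ =>
      mul_nonneg (hC0 i j) (hz.1 i j)
end
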